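/- Let {|ψ_x⟩, p(x)}_{x∈X} and {|φ_y⟩, q(y)}_{y∈Y} be two finite pure-state ensembles on system S (unit vectors with probability weights summing to 1), encoded as the classically-flagged beliefs β = Σ_x p(x)|ψ_x⟩⟨ψ_x|⊗|x⟩⟨x| on S⊗R₁ and γ = Σ_y q(y)|φ_y⟩⟨φ_y|⊗|y⟩⟨y| on S⊗R₂, where {|x⟩} and {|y⟩} are standard orthonormal bases of R₁ and R₂. Then β and γ are equivalent beliefs if and only if their second moments are equal: Σ_x p(x)|ψ_x⟩⟨ψ_x|⊗|ψ_x⟩⟨ψ_x| = Σ_y q(y)|φ_y⟩⟨φ_y|⊗|φ_y⟩⟨φ_y|. -/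

import Mathlib

open Matrix
open scoped Kronecker ComplexOrder


open Classical in
/-- The positive semidefinite square root of a matrix (zero if not PSD). -/
noncomputable def msqrt {n : Type*} [Fintype n] [DecidableEq n] (A : Matrix n n ℂ) :
    Matrix n n ℂ :=
  if h : A.PosSemidef then
    (h.1.eigenvectorUnitary : Matrix n n ℂ) *
      diagonal ((↑) ∘ (Real.sqrt ·) ∘ h.1.eigenvalues) *
      (star h.1.eigenvectorUnitary : Matrix n n ℂ)
  else 0

/-- `A^{-1/2}`: the (nonsingular) inverse of the PSD square root. -/
noncomputable def invsqrt {n : Type*} [Fintype n] [DecidableEq n] (A : Matrix n n ℂ) :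
    Matrix n n ℂ :=
  (msqrt A)⁻¹

/-- Partial trace over the second factor `R`. -/
noncomputable def ptraceR {S R : Type*} [Fintype R] (M : Matrix (S × R) (S × R) ℂ) : Matrix S S ℂ :=
  Matrix.of fun s s' => ∑ r, M (s, r) (s', r)

/-- A density matrix: positive semidefinite with unit trace. -/
def IsDensity {n : Type*} [Fintype n] (A : Matrix n n ℂ) : Prop :=
  A.PosSemidef ∧ A.trace = 1

/-- The Choi matrix of a linear map between matrix algebras. -/
def choi {S T : Type*} [Fintype S] [DecidableEq S]
    (E : Matrix S S ℂ →ₗ[ℂ] Matrix T T ℂ) : Matrix (S × T) (S × T) ℂ :=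
  Matrix.of fun p q => E (Matrix.single p.1 q.1 1) p.2 q.2

/-- Completely positive trace-preserving map. -/
def IsCPTP {S T : Type*} [Fintype S] [DecidableEq S] [Fintype T]
    (E : Matrix S S ℂ →ₗ[ℂ] Matrix T T ℂ) : Prop :=
  (∀ X, (E X).trace = X.trace) ∧ (choi E).PosSemidef

/-- The Hilbert-Schmidt adjoint `E†`, satisfying `Tr[E(X)† Y] = Tr[X† E†(Y)]`. -/
noncomputable def adjMap {S T : Type*} [Fintype S] [DecidableEq S] [Fintype T]
    (E : Matrix S S ℂ →ₗ[ℂ] Matrix T T ℂ) (Y : Matrix T T ℂ) : Matrix S S ℂ :=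
  Matrix.of fun i j => ((E (Matrix.single i j 1))ᴴ * Y).trace

/-- The original Petz map `R^{E,βS}(σ) = √βS E†(E(βS)^{-1/2} σ E(βS)^{-1/2}) √βS`. -/
noncomputable def petz {S T : Type*} [Fintype S] [DecidableEq S] [Fintype T] [DecidableEq T]
    (E : Matrix S S ℂ →ₗ[ℂ] Matrix T T ℂ) (βS : Matrix S S ℂ) (σ : Matrix T T ℂ) :
    Matrix S S ℂ :=
  msqrt βS * adjMap E (invsqrt (E βS) * σ * invsqrt (E βS)) * msqrt βS

/-- The prior-extended Petz map `R^{E⊗Tr,β}`. -/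
noncomputable def petzExt {S R T : Type*} [Fintype S] [DecidableEq S]
    [Fintype R] [DecidableEq R] [Fintype T] [DecidableEq T]
    (E : Matrix S S ℂ →ₗ[ℂ] Matrix T T ℂ) (β : Matrix (S × R) (S × R) ℂ)
    (σ : Matrix T T ℂ) : Matrix (S × R) (S × R) ℂ :=
  msqrt β *
    (adjMap E (invsqrt (E (ptraceR β)) * σ * invsqrt (E (ptraceR β))) ⊗ₖ (1 : Matrix R R ℂ)) *
    msqrt β

/-- The retrodiction map `R_ext^{E,β} = Tr_R ∘ R^{E⊗Tr,β}`. -/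
noncomputable def retroExt {S R T : Type*} [Fintype S] [DecidableEq S]
    [Fintype R] [DecidableEq R] [Fintype T] [DecidableEq T]
    (E : Matrix S S ℂ →ₗ[ℂ] Matrix T T ℂ) (β : Matrix (S × R) (S × R) ℂ)
    (σ : Matrix T T ℂ) : Matrix S S ℂ :=
  ptraceR (petzExt E β σ)

/-- Two beliefs are equivalent if they induce the same retrodiction map for all channels. -/
def EquivBeliefs {S R₁ R₂ : Type*} [Fintype S] [DecidableEq S]
    [Fintype R₁] [DecidableEq R₁] [Fintype R₂] [DecidableEq R₂]
    (β : Matrix (S × R₁) (S × R₁) ℂ) (γ : Matrix (S × R₂) (S × R₂) ℂ) : Prop :=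
  ∀ (T : Type) (_ : Fintype T) (_ : DecidableEq T)
    (E : Matrix S S ℂ →ₗ[ℂ] Matrix T T ℂ),
    IsCPTP E → (E (ptraceR β)).PosDef → (E (ptraceR γ)).PosDef →
    ∀ σ : Matrix T T ℂ, retroExt E β σ = retroExt E γ σ



/-! ### Auxiliary lemmas -/

section Aux

variable {n : Type*} [Fintype n] [DecidableEq n]

omit [DecidableEq n] in
lemma star_dotProduct_comm' (a b : n → ℂ) : star (star a ⬝ᵥ b) = star b ⬝ᵥ a := by
  simp only [dotProduct, star_sum, star_mul', star_star, Pi.star_apply]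
  exact Finset.sum_congr rfl fun i _ => mul_comm _ _

omit [Fintype n] [DecidableEq n] in
lemma vmv_conjTranspose (v : n → ℂ) : (vecMulVec v (star v))ᴴ = vecMulVec v (star v) := by
  ext i j
  simp [vecMulVec_apply, conjTranspose_apply, mul_comm]

omit [DecidableEq n] in
lemma psd_vecMulVec (v : n → ℂ) : (vecMulVec v (star v)).PosSemidef := by
  refine Matrix.PosSemidef.of_dotProduct_mulVec_nonneg (vmv_conjTranspose v) fun x => ?_
  have h1 : (vecMulVec v (star v)) *ᵥ x = (star v ⬝ᵥ x) • v := by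
    ext i
    simp only [mulVec, vecMulVec_apply, dotProduct, Pi.smul_apply, smul_eq_mul, Finset.sum_mul,
      Finset.mul_sum, Pi.star_apply]
    exact Finset.sum_congr rfl fun k _ => by ring
  rw [h1]
  rw [dotProduct_smul]
  have h2 : star x ⬝ᵥ v = star (star v ⬝ᵥ x) := by
    rw [star_dotProduct_comm']
  rw [h2, smul_eq_mul]
  have h3 : star v ⬝ᵥ x * star (star v ⬝ᵥ x) = ((Complex.normSq (star v ⬝ᵥ x) : ℝ) : ℂ) := by
    rw [RCLike.star_def, Complex.mul_conj]
  rw [h3]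
  exact Complex.zero_le_real.2 (Complex.normSq_nonneg _)

omit [DecidableEq n] in
lemma psd_smul {A : Matrix n n ℂ} (h : A.PosSemidef) {c : ℝ} (hc : 0 ≤ c) :
    ((c : ℂ) • A).PosSemidef := by
  refine Matrix.PosSemidef.of_dotProduct_mulVec_nonneg ?_ fun x => ?_
  · unfold Matrix.IsHermitian
    rw [conjTranspose_smul, h.1]
    simp
  · rw [smul_mulVec, dotProduct_smul]
    exact smul_nonneg (Complex.zero_le_real.2 hc) (h.dotProduct_mulVec_nonneg x)

omit [DecidableEq n] in
lemma psd_sum {ι : Type*} (s : Finset ι) (f : ι → Matrix n n ℂ)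
    (h : ∀ i ∈ s, (f i).PosSemidef) : (∑ i ∈ s, f i).PosSemidef := by
  classical
  induction s using Finset.induction with
  | empty => simpa using Matrix.PosSemidef.zero
  | insert _ _ hx ih =>
    rw [Finset.sum_insert hx]
    exact ((h _ (Finset.mem_insert_self _ _)).add
      (ih fun i hi => h i (Finset.mem_insert_of_mem hi)))

omit [DecidableEq n] in
lemma vmv_mul_vmv (a b c d : n → ℂ) :
    vecMulVec a b * vecMulVec c d = (b ⬝ᵥ c) • vecMulVec a d := by
  ext i j
  simp only [mul_apply, vecMulVec_apply, Matrix.smul_apply, smul_eq_mul, dotProduct, Finset.sum_mul]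
  exact Finset.sum_congr rfl fun k _ => by ring

omit [DecidableEq n] in
lemma vmv_mul_mid (a b c d : n → ℂ) (M : Matrix n n ℂ) :
    vecMulVec a b * M * vecMulVec c d = (b ⬝ᵥ (M *ᵥ c)) • vecMulVec a d := by
  ext i j
  simp only [mul_apply, vecMulVec_apply, Matrix.smul_apply, smul_eq_mul, dotProduct, mulVec,
    Finset.sum_mul, Finset.mul_sum]
  rw [Finset.sum_comm]
  refine Finset.sum_congr rfl fun k _ => ?_
  refine Finset.sum_congr rfl fun l _ => by ring

omit [DecidableEq n] in
lemma trace_vmv (v w : n → ℂ) : (vecMulVec v w).trace = v ⬝ᵥ w := by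
  simp [Matrix.trace, vecMulVec_apply, dotProduct, Matrix.diag]

lemma kron_vmv_vmv {S X : Type*} (u : S → ℂ) (v : X → ℂ) :
    vecMulVec u (star u) ⊗ₖ vecMulVec v (star v) =
      vecMulVec (fun p : S × X => u p.1 * v p.2) (star (fun p : S × X => u p.1 * v p.2)) := by
  ext ⟨i, r⟩ ⟨j, s⟩
  simp only [kroneckerMap_apply, vecMulVec_apply, Pi.star_apply, star_mul']
  ring

lemma stdBasis_eq_vmv {X : Type*} [DecidableEq X] (x : X) :
    single x x (1 : ℂ) =
      vecMulVec (fun r => if r = x then 1 else 0) (star (fun r => if r = x then 1 else 0)) := by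
  ext i j
  simp only [vecMulVec_apply, Pi.star_apply]
  by_cases hi : i = x <;> by_cases hj : j = x <;>
    simp [hi, hj, Matrix.single, and_comm, Ne.symm, eq_comm]

open scoped MatrixOrder in
lemma msqrt_eq {A B : Matrix n n ℂ} (hA : A.PosSemidef) (hB : B.PosSemidef) (h : B * B = A) :
    msqrt A = B := by
  have hs : msqrt A = CFC.sqrt A := by
    rw [msqrt, dif_pos hA, CFC.sqrt_eq_cfc, cfc_nnreal_eq_real _ A, hA.1.cfc_eq]
    simp [IsHermitian.cfc, Function.comp_def, max_eq_left, hA.eigenvalues_nonneg]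
  rw [hs]
  exact CFC.sqrt_unique h hB.nonneg

lemma msqrt_one : msqrt (1 : Matrix n n ℂ) = 1 :=
  msqrt_eq Matrix.PosSemidef.one Matrix.PosSemidef.one (one_mul 1)

end Aux


section Ensemble

variable {S X : Type*} [Fintype S] [DecidableEq S] [Fintype X] [DecidableEq X]

/-- The belief matrix of a flagged pure-state ensemble. -/
noncomputable def belief (ψ : X → S → ℂ) (p : X → ℝ) : Matrix (S × X) (S × X) ℂ :=
  ∑ x, (p x : ℂ) •
    (Matrix.vecMulVec (ψ x) (star (ψ x)) ⊗ₖ Matrix.single x x (1 : ℂ))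

lemma belief_psd (ψ : X → S → ℂ) {p : X → ℝ} (hp : ∀ x, 0 ≤ p x) :
    (belief ψ p).PosSemidef := by
  refine psd_sum _ _ fun x _ => psd_smul ?_ (hp x)
  rw [stdBasis_eq_vmv, kron_vmv_vmv]
  exact psd_vecMulVec _

lemma unit_dot {ψ : S → ℂ} (hψ : ∑ i, Complex.normSq (ψ i) = 1) :
    star ψ ⬝ᵥ ψ = 1 := by
  have : star ψ ⬝ᵥ ψ = ((∑ i, Complex.normSq (ψ i) : ℝ) : ℂ) := by
    push_cast
    refine Finset.sum_congr rfl fun i _ => ?_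
    rw [Pi.star_apply, RCLike.star_def, Complex.normSq_eq_conj_mul_self]
  rw [this, hψ]
  norm_num

lemma unit_dot' {ψ : S → ℂ} (hψ : ∑ i, Complex.normSq (ψ i) = 1) :
    ψ ⬝ᵥ star ψ = 1 := by
  rw [dotProduct_comm]
  exact unit_dot hψ

/-- multiplication of two block-diagonal flagged sums -/
lemma ensemble_mul (c d : X → ℂ) (A B : X → Matrix S S ℂ) :
    (∑ x, c x • (A x ⊗ₖ Matrix.single x x (1 : ℂ))) *
      (∑ x, d x • (B x ⊗ₖ Matrix.single x x (1 : ℂ))) =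
    ∑ x, (c x * d x) • ((A x * B x) ⊗ₖ Matrix.single x x (1 : ℂ)) := by
  rw [Finset.sum_mul]
  refine Finset.sum_congr rfl fun x _ => ?_
  rw [Finset.mul_sum]
  rw [Finset.sum_eq_single x]
  · rw [smul_mul_assoc, mul_smul_comm, smul_smul, ← Matrix.mul_kronecker_mul,
      Matrix.single_mul_single_same, mul_one]
  · intro y _ hyx
    rw [smul_mul_assoc, mul_smul_comm, ← Matrix.mul_kronecker_mul,
      Matrix.single_mul_single_of_ne (h := Ne.symm hyx), Matrix.kronecker_zero,
      smul_zero, smul_zero]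
  · intro hx
    exact absurd (Finset.mem_univ x) hx

lemma ensemble_mul_right (c : X → ℂ) (A : X → Matrix S S ℂ) (M : Matrix S S ℂ) :
    (∑ x, c x • (A x ⊗ₖ Matrix.single x x (1 : ℂ))) * (M ⊗ₖ (1 : Matrix X X ℂ)) =
    ∑ x, c x • ((A x * M) ⊗ₖ Matrix.single x x (1 : ℂ)) := by
  rw [Finset.sum_mul]
  refine Finset.sum_congr rfl fun x _ => ?_
  rw [smul_mul_assoc, ← Matrix.mul_kronecker_mul, mul_one]

lemma ptraceR_sum_kron {R : Type*} [Fintype R] (c : X → ℂ) (A : X → Matrix S S ℂ)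
    (B : X → Matrix R R ℂ) :
    ptraceR (∑ x, c x • (A x ⊗ₖ B x)) = ∑ x, (c x * (B x).trace) • A x := by
  ext i j
  simp only [ptraceR, Matrix.of_apply, Matrix.sum_apply, Matrix.smul_apply,
    Matrix.kroneckerMap_apply, smul_eq_mul, Matrix.trace, Matrix.diag_apply]
  rw [Finset.sum_comm]
  refine Finset.sum_congr rfl fun x _ => ?_
  rw [Finset.mul_sum, Finset.sum_mul]
  refine Finset.sum_congr rfl fun r _ => by ring

lemma trace_stdBasis (x : X) : (Matrix.single x x (1 : ℂ)).trace = 1 := by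
  rw [stdBasis_eq_vmv, trace_vmv]
  simp [dotProduct, Finset.sum_ite_eq', apply_ite]

lemma ptraceR_belief {ψ : X → S → ℂ} {p : X → ℝ} :
    ptraceR (belief ψ p) = ∑ x, (p x : ℂ) • Matrix.vecMulVec (ψ x) (star (ψ x)) := by
  rw [belief, ptraceR_sum_kron]
  refine Finset.sum_congr rfl fun x _ => by rw [trace_stdBasis, mul_one]

lemma msqrt_belief {ψ : X → S → ℂ} {p : X → ℝ}
    (hψ : ∀ x, ∑ i, Complex.normSq (ψ x i) = 1) (hp : ∀ x, 0 ≤ p x) :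
    msqrt (belief ψ p) = ∑ x, (Real.sqrt (p x) : ℂ) •
      (Matrix.vecMulVec (ψ x) (star (ψ x)) ⊗ₖ Matrix.single x x (1 : ℂ)) := by
  refine msqrt_eq (belief_psd ψ hp) ?_ ?_
  · refine psd_sum _ _ fun x _ => psd_smul ?_ (Real.sqrt_nonneg _)
    rw [stdBasis_eq_vmv, kron_vmv_vmv]
    exact psd_vecMulVec _
  · rw [ensemble_mul, belief]
    refine Finset.sum_congr rfl fun x _ => ?_
    rw [vmv_mul_vmv, unit_dot (hψ x), one_smul]
    congr 1
    rw [← Complex.ofReal_mul, Real.mul_self_sqrt (hp x)]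

end Ensemble


section Retro

variable {S X T : Type*} [Fintype S] [DecidableEq S] [Fintype X] [DecidableEq X]
  [Fintype T] [DecidableEq T]

/-- The second moment matrix of an ensemble. -/
noncomputable def secmom (ψ : X → S → ℂ) (p : X → ℝ) : Matrix (S × S) (S × S) ℂ :=
  ∑ x, (p x : ℂ) •
    (Matrix.vecMulVec (ψ x) (star (ψ x)) ⊗ₖ Matrix.vecMulVec (ψ x) (star (ψ x)))

omit [Fintype T] [DecidableEq T] in
lemma ptraceR_secmom {ψ : X → S → ℂ} {p : X → ℝ}
    (hψ : ∀ x, ∑ i, Complex.normSq (ψ x i) = 1) :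
    ptraceR (secmom ψ p) = ∑ x, (p x : ℂ) • Matrix.vecMulVec (ψ x) (star (ψ x)) := by
  rw [secmom, ptraceR_sum_kron]
  refine Finset.sum_congr rfl fun x _ => ?_
  rw [trace_vmv, unit_dot' (hψ x), mul_one]

lemma retro_formula (ψ : X → S → ℂ) (p : X → ℝ)
    (hψ : ∀ x, ∑ i, Complex.normSq (ψ x i) = 1) (hp : ∀ x, 0 ≤ p x)
    (E : Matrix S S ℂ →ₗ[ℂ] Matrix T T ℂ) (σ : Matrix T T ℂ) :
    retroExt E (belief ψ p) σ =
      ∑ x, ((p x : ℂ) * (star (ψ x) ⬝ᵥ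
          (adjMap E (invsqrt (E (ptraceR (belief ψ p))) * σ *
            invsqrt (E (ptraceR (belief ψ p)))) *ᵥ ψ x))) •
        Matrix.vecMulVec (ψ x) (star (ψ x)) := by
  set A := adjMap E (invsqrt (E (ptraceR (belief ψ p))) * σ *
    invsqrt (E (ptraceR (belief ψ p)))) with hA
  show ptraceR (msqrt (belief ψ p) * (A ⊗ₖ (1 : Matrix X X ℂ)) * msqrt (belief ψ p)) = _
  rw [msqrt_belief hψ hp, ensemble_mul_right, ensemble_mul, ptraceR_sum_kron]
  refine Finset.sum_congr rfl fun x _ => ?_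
  rw [trace_stdBasis, mul_one, vmv_mul_mid, smul_smul]
  congr 2
  rw [← Complex.ofReal_mul, Real.mul_self_sqrt (hp x)]

omit [Fintype T] [DecidableEq T] in
lemma readout (ψ : X → S → ℂ) (p : X → ℝ) (A : Matrix S S ℂ) :
    (∑ x, ((p x : ℂ) * (star (ψ x) ⬝ᵥ (A *ᵥ ψ x))) •
        Matrix.vecMulVec (ψ x) (star (ψ x))) =
      Matrix.of (fun i j => ∑ l, ∑ k, A l k * secmom ψ p (i, k) (j, l)) := by
  ext i j
  simp only [secmom, Matrix.sum_apply, Matrix.smul_apply, Matrix.of_apply, smul_eq_mul,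
    vecMulVec_apply, Pi.star_apply, dotProduct, mulVec, kroneckerMap_apply,
    Finset.mul_sum, Finset.sum_mul]
  rw [Finset.sum_comm]
  refine Finset.sum_congr rfl fun l _ => ?_
  rw [Finset.sum_comm]
  refine Finset.sum_congr rfl fun k _ => ?_
  refine Finset.sum_congr rfl fun x _ => by ring

end Retro


section Channels

variable {S : Type*} [Fintype S] [DecidableEq S]

lemma trace_single (i j : S) :
    (Matrix.single i j (1 : ℂ)).trace = if i = j then 1 else 0 := by
  by_cases h : i = j
  · subst h; rw [trace_stdBasis]; simp
  · rw [if_neg h, Matrix.trace]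
    refine Finset.sum_eq_zero fun k _ => ?_
    simp only [Matrix.diag_apply, Matrix.single, Matrix.of_apply]
    rw [if_neg]
    rintro ⟨rfl, rfl⟩
    exact h rfl

lemma trace_mul_stdBasis (M : Matrix S S ℂ) (i j : S) :
    (M * Matrix.single i j (1 : ℂ)).trace = M j i := by
  rw [Matrix.trace]
  rw [Finset.sum_eq_single j]
  · simp [Matrix.diag]
  · intro k _ hk
    simp [Matrix.diag, Matrix.mul_single_apply_of_ne (hbj := hk)]
  · intro hj; exact absurd (Finset.mem_univ j) hj

lemma trace_vmv_mul (v : S → ℂ) (M : Matrix S S ℂ) :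
    (Matrix.vecMulVec v (star v) * M).trace = star v ⬝ᵥ (M *ᵥ v) := by
  simp only [Matrix.trace, Matrix.diag_apply, Matrix.mul_apply, vecMulVec_apply,
    Pi.star_apply, dotProduct, mulVec]
  rw [Finset.sum_comm]
  refine Finset.sum_congr rfl fun k _ => ?_
  rw [Finset.mul_sum]
  refine Finset.sum_congr rfl fun i _ => by ring

/-- The trace channel to a trivial system. -/
noncomputable def trChan (S : Type*) [Fintype S] [DecidableEq S] :
    Matrix S S ℂ →ₗ[ℂ] Matrix Unit Unit ℂ where
  toFun X := Matrix.of fun _ _ => X.trace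
  map_add' X Y := by ext u v; simp
  map_smul' c X := by ext u v; simp

lemma trChan_apply (X : Matrix S S ℂ) : trChan S X = Matrix.of fun _ _ => X.trace := rfl

lemma choi_trChan : choi (trChan S) = 1 := by
  ext ⟨i, u⟩ ⟨j, v⟩
  show (Matrix.single i j (1:ℂ)).trace = _
  rw [trace_single, Matrix.one_apply]
  by_cases h : i = j <;> simp [h, Prod.ext_iff]

lemma trChan_cptp : IsCPTP (trChan S) := by
  constructor
  · intro X
    show (Matrix.of (fun (_ _ : Unit) => X.trace)).trace = X.trace
    simp [Matrix.trace, Matrix.diag]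
  · rw [choi_trChan]
    exact Matrix.PosSemidef.one

lemma adjMap_trChan_one : adjMap (trChan S) (1 : Matrix Unit Unit ℂ) = 1 := by
  ext i j
  show ((trChan S (Matrix.single i j 1))ᴴ * 1).trace = _
  rw [mul_one, trChan_apply]
  have : (Matrix.of fun (_ _ : Unit) => (Matrix.single i j (1:ℂ)).trace)ᴴ =
      Matrix.of fun (_ _ : Unit) => star (Matrix.single i j (1:ℂ)).trace := by
    ext u v; simp [Matrix.conjTranspose_apply]
  rw [this]
  rw [trace_single]
  simp only [Matrix.trace, Matrix.diag_apply, Matrix.of_apply]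
  by_cases h : i = j <;> simp [h, Matrix.one_apply]

/-- Two-outcome measure-and-prepare channel with effect `G`. -/
noncomputable def mpChan (G : Matrix S S ℂ) : Matrix S S ℂ →ₗ[ℂ] Matrix Bool Bool ℂ where
  toFun X := Matrix.diagonal fun t => if t then ((1 - G) * X).trace else (G * X).trace
  map_add' X Y := by
    ext t t'
    by_cases h : t = t'
    · subst h; cases t <;> simp [Matrix.diagonal_apply_eq, mul_add]
    · simp [Matrix.diagonal_apply_ne _ h, h]
  map_smul' c X := by
    ext t t'
    by_cases h : t = t'
    · subst h; cases t <;> simp [Matrix.diagonal_apply_eq, Matrix.mul_smul]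
    · simp [Matrix.diagonal_apply_ne _ h, h]

lemma mpChan_apply (G X : Matrix S S ℂ) :
    mpChan G X = Matrix.diagonal fun t => if t then ((1 - G) * X).trace else (G * X).trace := rfl

lemma mpChan_tp (G : Matrix S S ℂ) (X : Matrix S S ℂ) : (mpChan G X).trace = X.trace := by
  rw [mpChan_apply, Matrix.trace_diagonal, Fintype.sum_bool]
  simp only [eq_self_iff_true, if_true, Bool.false_eq_true, if_false]
  rw [Matrix.sub_mul, Matrix.one_mul, Matrix.trace_sub]
  ring

lemma choi_mpChan (G : Matrix S S ℂ) : choi (mpChan G) =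
    Matrix.of fun (p : S × Bool) (q : S × Bool) =>
      if p.2 = q.2 then (if p.2 then (1 - G) else G) q.1 p.1 else 0 := by
  ext ⟨i, t⟩ ⟨j, t'⟩
  simp only [choi, Matrix.of_apply, mpChan_apply]
  rw [Matrix.diagonal_apply]
  by_cases h : t = t'
  · subst h
    cases t <;> simp [trace_mul_stdBasis]
  · simp [h]

lemma choi_mpChan_psd {G : Matrix S S ℂ} (h0 : Gᵀ.PosSemidef)
    (h1 : (1 - G)ᵀ.PosSemidef) : (choi (mpChan G)).PosSemidef := by
  rw [choi_mpChan]
  refine Matrix.PosSemidef.of_dotProduct_mulVec_nonneg ?_ ?_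
  · have hG : ∀ a b, star (G a b) = G b a := fun a b => by
      simpa [Matrix.conjTranspose_apply] using congrFun (congrFun h0.1 a) b
    ext ⟨i, t⟩ ⟨j, t'⟩
    simp only [Matrix.conjTranspose_apply, Matrix.of_apply]
    by_cases h : t = t'
    · subst h
      simp only [if_pos rfl]
      cases t
      · simpa using hG i j
      · simp only [if_true, Matrix.sub_apply, star_sub, hG]
        congr 1
        simp [Matrix.one_apply, apply_ite, eq_comm]
    · rw [if_neg (fun hh => h hh.symm), if_neg h, star_zero]
  · intro z
    have hz : star z ⬝ᵥ ((Matrix.of fun (p : S × Bool) (q : S × Bool) =>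
        if p.2 = q.2 then (if p.2 then (1 - G) else G) q.1 p.1 else 0) *ᵥ z) =
        ∑ t : Bool, star (fun i => z (i, t)) ⬝ᵥ
          ((if t then (1 - G) else G)ᵀ *ᵥ fun i => z (i, t)) := by
      simp only [dotProduct, mulVec, Matrix.of_apply, Pi.star_apply, Matrix.transpose_apply]
      rw [Fintype.sum_prod_type, Finset.sum_comm]
      refine Finset.sum_congr rfl fun t _ => ?_
      refine Finset.sum_congr rfl fun i _ => ?_
      congr 1
      rw [Fintype.sum_prod_type]
      refine Finset.sum_congr rfl fun j _ => ?_
      simp [Finset.sum_ite_eq, ite_mul]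
    rw [hz]
    refine Finset.sum_nonneg fun t _ => ?_
    cases t
    · simpa using h0.dotProduct_mulVec_nonneg fun i => z (i, false)
    · simpa using h1.dotProduct_mulVec_nonneg fun i => z (i, true)

lemma mpChan_marg {G : Matrix S S ℂ} {βS : Matrix S S ℂ} (htr : βS.trace = 1) :
    mpChan G βS = Matrix.diagonal
      (fun t => if t then 1 - (G * βS).trace else (G * βS).trace) := by
  rw [mpChan_apply]
  congr 1; funext t
  cases t <;> simp [Matrix.sub_mul, Matrix.trace_sub, htr]

lemma invsqrt_diagonal {n : Type*} [Fintype n] [DecidableEq n] (d : n → ℝ)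
    (hd : ∀ t, 0 < d t) :
    invsqrt (Matrix.diagonal (fun t => (d t : ℂ))) =
      Matrix.diagonal (fun t => (((Real.sqrt (d t))⁻¹ : ℝ) : ℂ)) := by
  have h1 : msqrt (Matrix.diagonal (fun t => (d t : ℂ))) =
      Matrix.diagonal (fun t => ((Real.sqrt (d t) : ℝ) : ℂ)) := by
    refine msqrt_eq ?_ ?_ ?_
    · exact Matrix.posSemidef_diagonal_iff.mpr fun t => Complex.zero_le_real.2 (hd t).le
    · exact Matrix.posSemidef_diagonal_iff.mpr fun t =>
        Complex.zero_le_real.2 (Real.sqrt_nonneg _)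
    · rw [Matrix.diagonal_mul_diagonal]
      exact congrArg Matrix.diagonal (funext fun t => by
        rw [← Complex.ofReal_mul, Real.mul_self_sqrt (hd t).le])
  rw [invsqrt, h1]
  refine Matrix.inv_eq_right_inv ?_
  rw [Matrix.diagonal_mul_diagonal, ← Matrix.diagonal_one]
  exact congrArg Matrix.diagonal (funext fun t => by
    rw [← Complex.ofReal_mul, mul_inv_cancel₀ (Real.sqrt_ne_zero'.2 (hd t))]
    norm_num)

lemma diag_std_diag {n : Type*} [Fintype n] [DecidableEq n] (e : n → ℂ) (f : n) :
    Matrix.diagonal e * Matrix.single f f (1 : ℂ) * Matrix.diagonal e =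
      (e f * e f) • Matrix.single f f (1 : ℂ) := by
  ext i j
  rw [Matrix.mul_diagonal, Matrix.diagonal_mul, Matrix.smul_apply]
  simp only [Matrix.single, Matrix.of_apply, smul_eq_mul]
  by_cases hi : f = i
  · by_cases hj : f = j
    · subst hi; subst hj; simp
    · simp [hj]
  · simp [hi]

lemma adjMap_mpChan {G : Matrix S S ℂ} (hG : G.IsHermitian) (c : ℂ) :
    adjMap (mpChan G) (c • Matrix.single false false (1 : ℂ)) = c • G := by
  ext i j
  show ((mpChan G (Matrix.single i j 1))ᴴ *
    (c • Matrix.single false false 1)).trace = _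
  rw [mpChan_apply, Matrix.diagonal_conjTranspose, Matrix.mul_smul, Matrix.trace_smul,
    trace_mul_stdBasis]
  simp only [Matrix.diagonal_apply_eq, Pi.star_apply, if_false, Bool.false_eq_true]
  rw [trace_mul_stdBasis]
  have : star (G j i) = G i j := by
    simpa [Matrix.conjTranspose_apply] using congrFun (congrFun hG i) j
  rw [this]
  simp

lemma normSq_dot_le (a b : S → ℂ) :
    Complex.normSq (star a ⬝ᵥ b) ≤
      (∑ i, Complex.normSq (a i)) * (∑ i, Complex.normSq (b i)) := by
  set a' : EuclideanSpace ℂ S := (WithLp.equiv 2 (S → ℂ)).symm a with ha'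
  set b' : EuclideanSpace ℂ S := (WithLp.equiv 2 (S → ℂ)).symm b with hb'
  have hab : star a ⬝ᵥ b = (inner ℂ a' b' : ℂ) := by
    simp [PiLp.inner_apply, RCLike.inner_apply, dotProduct, ha', hb', mul_comm]
  have h := norm_inner_le_norm (𝕜 := ℂ) a' b'
  have hsq : Complex.normSq (star a ⬝ᵥ b) ≤ (‖a'‖ * ‖b'‖) ^ 2 := by
    rw [hab, ← Complex.sq_norm]
    exact pow_le_pow_left₀ (norm_nonneg _) h 2
  have hna : ‖a'‖ ^ 2 = ∑ i, Complex.normSq (a i) := by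
    rw [EuclideanSpace.norm_eq, Real.sq_sqrt (by positivity)]
    refine Finset.sum_congr rfl fun i _ => ?_
    rw [← Complex.sq_norm]
    simp [ha']
  have hnb : ‖b'‖ ^ 2 = ∑ i, Complex.normSq (b i) := by
    rw [EuclideanSpace.norm_eq, Real.sq_sqrt (by positivity)]
    refine Finset.sum_congr rfl fun i _ => ?_
    rw [← Complex.sq_norm]
    simp [hb']
  calc Complex.normSq (star a ⬝ᵥ b) ≤ (‖a'‖ * ‖b'‖) ^ 2 := hsq
    _ = ‖a'‖ ^ 2 * ‖b'‖ ^ 2 := by ring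
    _ = _ := by rw [hna, hnb]

lemma quad_zero {n : Type*} [Fintype n] [DecidableEq n] (D : Matrix n n ℂ)
    (h : ∀ v : n → ℂ, star v ⬝ᵥ (D *ᵥ v) = 0) : D = 0 := by
  have hT : ∀ x : EuclideanSpace ℂ n, (inner ℂ (Matrix.toEuclideanLin D x) x : ℂ) = 0 := by
    intro x
    have hx := congrArg star (h ((WithLp.equiv 2 (n → ℂ)) x))
    rw [star_dotProduct_comm', star_zero] at hx
    simpa [PiLp.inner_apply, RCLike.inner_apply, dotProduct, Matrix.toEuclideanLin_apply,
      mulVec, mul_comm] using hx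
  have hD := (inner_map_self_eq_zero (Matrix.toEuclideanLin D)).mp hT
  have h0 : Matrix.toEuclideanLin D = Matrix.toEuclideanLin (0 : Matrix n n ℂ) := by
    rw [map_zero]; exact hD
  exact Matrix.toEuclideanLin.injective h0

end Channels


section MoreAux

variable {S X : Type*} [Fintype S] [DecidableEq S] [Fintype X] [DecidableEq X]

omit [DecidableEq S] in
lemma vmv_mulVec (w v : S → ℂ) :
    Matrix.vecMulVec w (star w) *ᵥ v = (star w ⬝ᵥ v) • w := by
  ext i
  simp only [mulVec, vecMulVec_apply, dotProduct, Pi.smul_apply, smul_eq_mul, Finset.sum_mul,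
    Finset.mul_sum, Pi.star_apply]
  exact Finset.sum_congr rfl fun k _ => by ring

omit [DecidableEq S] in
lemma quad_vmv (ψ v : S → ℂ) :
    star v ⬝ᵥ (Matrix.vecMulVec ψ (star ψ) *ᵥ v) =
      ((Complex.normSq (star ψ ⬝ᵥ v) : ℝ) : ℂ) := by
  rw [vmv_mulVec, dotProduct_smul, smul_eq_mul,
    show star v ⬝ᵥ ψ = star (star ψ ⬝ᵥ v) from (star_dotProduct_comm' ψ v).symm]
  rw [RCLike.star_def, Complex.mul_conj]

omit [DecidableEq S] in
lemma sum_mulVec' {ι : Type*} (s : Finset ι) (f : ι → Matrix S S ℂ) (v : S → ℂ) :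
    (∑ i ∈ s, f i) *ᵥ v = ∑ i ∈ s, f i *ᵥ v := by
  ext k
  simp only [mulVec, dotProduct, Matrix.sum_apply, Finset.sum_mul, Finset.sum_apply]
  rw [Finset.sum_comm]

omit [Fintype S] [DecidableEq S] in
lemma dotProduct_sum' {ι : Type*} [Fintype S] (s : Finset ι) (a : S → ℂ) (f : ι → S → ℂ) :
    a ⬝ᵥ (∑ i ∈ s, f i) = ∑ i ∈ s, a ⬝ᵥ f i := by
  simp only [dotProduct, Finset.sum_apply, Finset.mul_sum]
  rw [Finset.sum_comm]

omit [DecidableEq S] in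
lemma quad_marg (ψ : X → S → ℂ) (p : X → ℝ) (v : S → ℂ) :
    star v ⬝ᵥ ((∑ x, (p x : ℂ) • Matrix.vecMulVec (ψ x) (star (ψ x))) *ᵥ v) =
      ((∑ x, p x * Complex.normSq (star (ψ x) ⬝ᵥ v) : ℝ) : ℂ) := by
  rw [sum_mulVec', dotProduct_sum']
  push_cast
  refine Finset.sum_congr rfl fun x _ => ?_
  rw [smul_mulVec, dotProduct_smul, quad_vmv, smul_eq_mul]

lemma trace_marg {ψ : X → S → ℂ} {p : X → ℝ}
    (hψ : ∀ x, ∑ i, Complex.normSq (ψ x i) = 1) (hp1 : ∑ x, p x = 1) :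
    (∑ x, (p x : ℂ) • Matrix.vecMulVec (ψ x) (star (ψ x))).trace = 1 := by
  rw [Matrix.trace_sum]
  have he : ∀ x ∈ Finset.univ, ((p x : ℂ) • Matrix.vecMulVec (ψ x) (star (ψ x))).trace
      = (p x : ℂ) := fun x _ => by
    rw [Matrix.trace_smul, trace_vmv, unit_dot' (hψ x), smul_eq_mul, mul_one]
  rw [Finset.sum_congr rfl he, ← Complex.ofReal_sum, hp1, Complex.ofReal_one]

omit [Fintype S] [DecidableEq S] in
lemma vmv_transpose (v : S → ℂ) :
    (Matrix.vecMulVec v (star v))ᵀ = Matrix.vecMulVec (star v) (star (star v)) := by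
  ext i j
  simp [vecMulVec_apply, mul_comm]

lemma one_sub_smul_vmv_psd (w : S → ℂ) {c : ℝ} (hc : 0 ≤ c)
    (hbound : c * (∑ i, Complex.normSq (w i)) ≤ 1) :
    ((1 : Matrix S S ℂ) - (c : ℂ) • Matrix.vecMulVec w (star w)).PosSemidef := by
  refine Matrix.PosSemidef.of_dotProduct_mulVec_nonneg ?_ ?_
  · show _ = _
    rw [Matrix.conjTranspose_sub, Matrix.conjTranspose_smul, vmv_conjTranspose,
      Matrix.conjTranspose_one]
    congr 1
    rw [RCLike.star_def, Complex.conj_ofReal]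
  · intro z
    rw [Matrix.sub_mulVec, dotProduct_sub, Matrix.one_mulVec, smul_mulVec,
      dotProduct_smul, quad_vmv]
    have hz : star z ⬝ᵥ z = ((∑ i, Complex.normSq (z i) : ℝ) : ℂ) := by
      push_cast
      refine Finset.sum_congr rfl fun i _ => ?_
      rw [Pi.star_apply, RCLike.star_def, Complex.normSq_eq_conj_mul_self]
    rw [hz, smul_eq_mul, ← Complex.ofReal_mul, ← Complex.ofReal_sub]
    refine Complex.zero_le_real.2 ?_
    have hcs := normSq_dot_le w z
    have h1 : c * Complex.normSq (star w ⬝ᵥ z) ≤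
        c * ((∑ i, Complex.normSq (w i)) * (∑ i, Complex.normSq (z i))) :=
      mul_le_mul_of_nonneg_left hcs hc
    have h2 : 0 ≤ ∑ i, Complex.normSq (z i) :=
      Finset.sum_nonneg fun i _ => Complex.normSq_nonneg _
    nlinarith [h2, hbound, h1]

end MoreAux


section Step2

variable {S X Y : Type*} [Fintype S] [DecidableEq S] [Fintype X] [DecidableEq X]
  [Fintype Y] [DecidableEq Y]

lemma step2 (ψ : X → S → ℂ) (φ : Y → S → ℂ) (p : X → ℝ) (q : Y → ℝ)
    (hψ : ∀ x, ∑ i, Complex.normSq (ψ x i) = 1)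
    (hφ : ∀ y, ∑ i, Complex.normSq (φ y i) = 1)
    (hp : ∀ x, 0 ≤ p x) (hq : ∀ y, 0 ≤ q y)
    (hp1 : ∑ x, p x = 1) (hq1 : ∑ y, q y = 1)
    (hmarg : (∑ x, (p x : ℂ) • Matrix.vecMulVec (ψ x) (star (ψ x))) =
      ∑ y, (q y : ℂ) • Matrix.vecMulVec (φ y) (star (φ y)))
    (h : EquivBeliefs (belief ψ p) (belief φ q)) (v : S → ℂ) :
    (∑ x, ((p x : ℂ) * ((star v ⬝ᵥ ψ x) * (star (ψ x) ⬝ᵥ v))) •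
        Matrix.vecMulVec (ψ x) (star (ψ x))) =
      ∑ y, ((q y : ℂ) * ((star v ⬝ᵥ φ y) * (star (φ y) ⬝ᵥ v))) •
        Matrix.vecMulVec (φ y) (star (φ y)) := by
  classical
  set nv := ∑ i, Complex.normSq (v i) with hnv
  have hnv0 : 0 ≤ nv := Finset.sum_nonneg fun i _ => Complex.normSq_nonneg _
  set c : ℝ := (3 * (nv + 1))⁻¹ with hcdef
  have hc0 : 0 < c := by rw [hcdef]; positivity
  set G : Matrix S S ℂ :=
    (c : ℂ) • Matrix.vecMulVec v (star v) + ((1/3 : ℝ) : ℂ) • 1 with hGdef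
  have hGH : G.IsHermitian := by
    show _ = _
    rw [hGdef, Matrix.conjTranspose_add, Matrix.conjTranspose_smul, Matrix.conjTranspose_smul,
      vmv_conjTranspose, Matrix.conjTranspose_one]
    simp [Complex.conj_ofReal]
  have hGT : Gᵀ.PosSemidef := by
    rw [hGdef, Matrix.transpose_add, Matrix.transpose_smul, Matrix.transpose_smul,
      Matrix.transpose_one, vmv_transpose]
    exact (psd_smul (psd_vecMulVec _) hc0.le).add (psd_smul Matrix.PosSemidef.one (by norm_num))
  have hnsv : ∑ i, Complex.normSq ((star v) i) = nv := by
    rw [hnv]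
    exact Finset.sum_congr rfl fun i _ => by simp [Complex.normSq_conj]
  have hGT' : ((1 : Matrix S S ℂ) - G)ᵀ.PosSemidef := by
    have hkey : ((1 : Matrix S S ℂ) - G)ᵀ =
        ((2/3 : ℝ) : ℂ) • ((1 : Matrix S S ℂ) -
          ((3 * c / 2 : ℝ) : ℂ) • Matrix.vecMulVec (star v) (star (star v))) := by
      rw [Matrix.transpose_sub, Matrix.transpose_one, hGdef, Matrix.transpose_add,
        Matrix.transpose_smul, Matrix.transpose_smul, Matrix.transpose_one, vmv_transpose]
      rw [smul_sub, smul_smul, ← Complex.ofReal_mul]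
      have he : ((2/3 : ℝ) * (3 * c / 2)) = c := by ring
      rw [he]
      have hone : ((2/3 : ℝ) : ℂ) • (1 : Matrix S S ℂ) =
          (1 : Matrix S S ℂ) - ((1/3 : ℝ) : ℂ) • 1 := by
        rw [show ((2/3 : ℝ) : ℂ) = 1 - ((1/3 : ℝ) : ℂ) by push_cast; norm_num, sub_smul,
          one_smul]
      rw [hone]
      abel
    rw [hkey]
    refine psd_smul ?_ (by norm_num)
    refine one_sub_smul_vmv_psd _ (by positivity) ?_
    rw [hnsv]
    have h3 : (3 * (nv + 1)) * c = 1 := by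
      rw [hcdef]; exact mul_inv_cancel₀ (by positivity)
    nlinarith [hnv0]
  have hcptp : IsCPTP (mpChan G) := ⟨mpChan_tp G, choi_mpChan_psd hGT hGT'⟩
  have hβtr : (ptraceR (belief ψ p)).trace = 1 := by
    rw [ptraceR_belief]; exact trace_marg hψ hp1
  set rv : ℝ := ∑ x, p x * Complex.normSq (star (ψ x) ⬝ᵥ v) with hrv
  have hrv0 : 0 ≤ rv := Finset.sum_nonneg fun x _ =>
    mul_nonneg (hp x) (Complex.normSq_nonneg _)
  have hrv1 : rv ≤ nv := by
    calc rv ≤ ∑ x, p x * nv := Finset.sum_le_sum fun x _ => by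
          have hb := normSq_dot_le (ψ x) v
          rw [hψ x, one_mul] at hb
          exact mul_le_mul_of_nonneg_left hb (hp x)
      _ = nv := by rw [← Finset.sum_mul, hp1, one_mul]
  set τ : ℝ := c * rv + 1/3 with hτdef
  have hτ0 : 0 < τ := by rw [hτdef]; positivity
  have hcb : c * rv < 1/3 := by
    have h3 : (3 * (nv + 1)) * c = 1 := by
      rw [hcdef]; exact mul_inv_cancel₀ (by positivity)
    nlinarith [mul_le_mul_of_nonneg_left hrv1 hc0.le]
  have hτ1 : τ < 1 := by rw [hτdef]; linarith
  have htrG : (G * ptraceR (belief ψ p)).trace = (τ : ℂ) := by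
    rw [ptraceR_belief, hGdef, Matrix.add_mul, Matrix.smul_mul, Matrix.smul_mul,
      Matrix.one_mul, Matrix.trace_add, Matrix.trace_smul, Matrix.trace_smul,
      trace_vmv_mul, quad_marg, ← hrv, trace_marg hψ hp1]
    rw [smul_eq_mul, smul_eq_mul, mul_one, hτdef]
    push_cast
    ring
  set dR : Bool → ℝ := fun t => if t then 1 - τ else τ with hdRdef
  have hdR : ∀ t, 0 < dR t := by
    intro t
    cases t
    · simpa [hdRdef] using hτ0
    · simp only [hdRdef, if_true]
      linarith
  have hEβ : mpChan G (ptraceR (belief ψ p)) =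
      Matrix.diagonal (fun t => ((dR t : ℝ) : ℂ)) := by
    rw [mpChan_marg hβtr, htrG]
    exact congrArg Matrix.diagonal (funext fun t => by
      cases t <;> simp [hdRdef] <;> push_cast <;> ring)
  have hmargP : ptraceR (belief φ q) = ptraceR (belief ψ p) := by
    rw [ptraceR_belief, ptraceR_belief]; exact hmarg.symm
  have hposβ : (mpChan G (ptraceR (belief ψ p))).PosDef := by
    rw [hEβ]
    exact Matrix.posDef_diagonal_iff.mpr fun t => Complex.zero_lt_real.2 (hdR t)
  have hposγ : (mpChan G (ptraceR (belief φ q))).PosDef := by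
    rw [hmargP]; exact hposβ
  have hre := h Bool inferInstance inferInstance (mpChan G) hcptp hposβ hposγ
    (Matrix.single false false 1)
  have hsand : invsqrt (mpChan G (ptraceR (belief ψ p))) *
      Matrix.single false false 1 * invsqrt (mpChan G (ptraceR (belief ψ p))) =
      ((τ⁻¹ : ℝ) : ℂ) • Matrix.single false false 1 := by
    rw [hEβ, invsqrt_diagonal dR hdR, diag_std_diag]
    congr 1
    have hdf : dR false = τ := by simp [hdRdef]
    rw [hdf, ← Complex.ofReal_mul, ← mul_inv, Real.mul_self_sqrt hτ0.le]
  rw [retro_formula ψ p hψ hp, retro_formula φ q hφ hq, hmargP, hsand,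
    adjMap_mpChan hGH] at hre
  -- simplify the quadratic forms
  have hdot : ∀ u : S → ℂ, (∑ i, Complex.normSq (u i) = 1) →
      star u ⬝ᵥ ((((τ⁻¹ : ℝ) : ℂ) • G) *ᵥ u) =
        ((τ⁻¹ : ℝ) : ℂ) * ((c : ℂ) * ((star v ⬝ᵥ u) * (star u ⬝ᵥ v)) + ((1/3 : ℝ) : ℂ)) := by
    intro u hu
    rw [smul_mulVec, dotProduct_smul, smul_eq_mul, hGdef, Matrix.add_mulVec,
      smul_mulVec, smul_mulVec, Matrix.one_mulVec, dotProduct_add,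
      dotProduct_smul, dotProduct_smul, vmv_mulVec, dotProduct_smul, unit_dot hu]
    simp only [smul_eq_mul, mul_one]
  have hrwX : (∑ z, ((p z : ℂ) * (star (ψ z) ⬝ᵥ ((((τ⁻¹ : ℝ) : ℂ) • G) *ᵥ ψ z))) •
          Matrix.vecMulVec (ψ z) (star (ψ z))) =
        ((τ⁻¹ : ℝ) : ℂ) • ((c : ℂ) •
            (∑ z, ((p z : ℂ) * ((star v ⬝ᵥ ψ z) * (star (ψ z) ⬝ᵥ v))) •
              Matrix.vecMulVec (ψ z) (star (ψ z))) +
          ((1/3 : ℝ) : ℂ) • ∑ z, (p z : ℂ) • Matrix.vecMulVec (ψ z) (star (ψ z))) := by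
    rw [Finset.smul_sum, Finset.smul_sum, ← Finset.sum_add_distrib, Finset.smul_sum]
    refine Finset.sum_congr rfl fun z _ => ?_
    rw [hdot (ψ z) (hψ z), smul_smul, smul_smul, ← add_smul, smul_smul]
    congr 1
    ring
  have hrwY : (∑ z, ((q z : ℂ) * (star (φ z) ⬝ᵥ ((((τ⁻¹ : ℝ) : ℂ) • G) *ᵥ φ z))) •
          Matrix.vecMulVec (φ z) (star (φ z))) =
        ((τ⁻¹ : ℝ) : ℂ) • ((c : ℂ) •
            (∑ z, ((q z : ℂ) * ((star v ⬝ᵥ φ z) * (star (φ z) ⬝ᵥ v))) •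
              Matrix.vecMulVec (φ z) (star (φ z))) +
          ((1/3 : ℝ) : ℂ) • ∑ z, (q z : ℂ) • Matrix.vecMulVec (φ z) (star (φ z))) := by
    rw [Finset.smul_sum, Finset.smul_sum, ← Finset.sum_add_distrib, Finset.smul_sum]
    refine Finset.sum_congr rfl fun z _ => ?_
    rw [hdot (φ z) (hφ z), smul_smul, smul_smul, ← add_smul, smul_smul]
    congr 1
    ring
  rw [hrwX, hrwY] at hre
  have hτne : ((τ⁻¹ : ℝ) : ℂ) ≠ 0 := by
    simpa using (inv_ne_zero hτ0.ne')
  have hcne : ((c : ℝ) : ℂ) ≠ 0 := by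
    simpa using hc0.ne'
  have hre2 := smul_right_injective (Matrix S S ℂ) hτne hre
  rw [hmarg] at hre2
  have hre3 := add_right_cancel hre2
  exact smul_right_injective (Matrix S S ℂ) hcne hre3

end Step2


lemma invsqrt_one {n : Type*} [Fintype n] [DecidableEq n] :
    invsqrt (1 : Matrix n n ℂ) = 1 := by
  rw [invsqrt, msqrt_one, inv_one]

lemma quad_expand {S X : Type*} [Fintype S] [DecidableEq S] [Fintype X] [DecidableEq X]
    (ψ : X → S → ℂ) (p : X → ℝ) (i j : S) (v : S → ℂ) :
    (∑ x, ((p x : ℂ) * ((star v ⬝ᵥ ψ x) * (star (ψ x) ⬝ᵥ v))) •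
        Matrix.vecMulVec (ψ x) (star (ψ x))) i j =
      star v ⬝ᵥ ((Matrix.of fun k l : S =>
        ∑ x, (p x : ℂ) * (ψ x i * star (ψ x j) * (ψ x k * star (ψ x l)))) *ᵥ v) := by
  simp only [Matrix.sum_apply, Matrix.smul_apply, smul_eq_mul, vecMulVec_apply, dotProduct,
    mulVec, Matrix.of_apply, Pi.star_apply, Finset.mul_sum, Finset.sum_mul]
  rw [Finset.sum_comm]
  conv_rhs => rw [Finset.sum_comm]
  refine Finset.sum_congr rfl fun k _ => ?_
  rw [Finset.sum_comm]
  refine Finset.sum_congr rfl fun l _ => ?_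
  refine Finset.sum_congr rfl fun x _ => by ring

/-- Two pure-state ensembles are equivalent beliefs iff their
second moments coincide. -/
theorem pure_ensembles_equiv_iff_second_moments
    {S X Y : Type*} [Fintype S] [DecidableEq S]
    [Fintype X] [DecidableEq X] [Fintype Y] [DecidableEq Y]
    (ψ : X → S → ℂ) (φ : Y → S → ℂ) (p : X → ℝ) (q : Y → ℝ)
    (hψ : ∀ x, ∑ i, Complex.normSq (ψ x i) = 1)
    (hφ : ∀ y, ∑ i, Complex.normSq (φ y i) = 1)
    (hp : ∀ x, 0 ≤ p x) (hq : ∀ y, 0 ≤ q y)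
    (hp1 : ∑ x, p x = 1) (hq1 : ∑ y, q y = 1) :
    EquivBeliefs
      (∑ x, (p x : ℂ) •
        (Matrix.vecMulVec (ψ x) (star (ψ x)) ⊗ₖ Matrix.single x x (1 : ℂ)))
      (∑ y, (q y : ℂ) •
        (Matrix.vecMulVec (φ y) (star (φ y)) ⊗ₖ Matrix.single y y (1 : ℂ))) ↔
    (∑ x, (p x : ℂ) •
        (Matrix.vecMulVec (ψ x) (star (ψ x)) ⊗ₖ Matrix.vecMulVec (ψ x) (star (ψ x)))) =
      ∑ y, (q y : ℂ) •
        (Matrix.vecMulVec (φ y) (star (φ y)) ⊗ₖ Matrix.vecMulVec (φ y) (star (φ y))) := by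
  show EquivBeliefs (belief ψ p) (belief φ q) ↔ secmom ψ p = secmom φ q
  constructor
  · intro h
    -- Step 1: equal marginals, via the trace channel.
    have hEβ : trChan S (ptraceR (belief ψ p)) = 1 := by
      rw [ptraceR_belief, trChan_apply]
      ext u u'
      rw [Matrix.of_apply, trace_marg hψ hp1]
      simp [Matrix.one_apply]
    have hEγ : trChan S (ptraceR (belief φ q)) = 1 := by
      rw [ptraceR_belief, trChan_apply]
      ext u u'
      rw [Matrix.of_apply, trace_marg hφ hq1]
      simp [Matrix.one_apply]
    have hposβ : (trChan S (ptraceR (belief ψ p))).PosDef := by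
      rw [hEβ]; exact Matrix.PosDef.one
    have hposγ : (trChan S (ptraceR (belief φ q))).PosDef := by
      rw [hEγ]; exact Matrix.PosDef.one
    have hmarg : (∑ x, (p x : ℂ) • Matrix.vecMulVec (ψ x) (star (ψ x))) =
        ∑ y, (q y : ℂ) • Matrix.vecMulVec (φ y) (star (φ y)) := by
      have h1 := h Unit inferInstance inferInstance (trChan S) trChan_cptp hposβ hposγ 1
      rw [retro_formula ψ p hψ hp, retro_formula φ q hφ hq, hEβ, hEγ, invsqrt_one,
        one_mul, mul_one, adjMap_trChan_one] at h1
      have eβ : (∑ x, ((p x : ℂ) * (star (ψ x) ⬝ᵥ ((1 : Matrix S S ℂ) *ᵥ ψ x))) •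
          Matrix.vecMulVec (ψ x) (star (ψ x))) =
          ∑ x, (p x : ℂ) • Matrix.vecMulVec (ψ x) (star (ψ x)) :=
        Finset.sum_congr rfl fun x _ => by
          rw [Matrix.one_mulVec, unit_dot (hψ x), mul_one]
      have eγ : (∑ y, ((q y : ℂ) * (star (φ y) ⬝ᵥ ((1 : Matrix S S ℂ) *ᵥ φ y))) •
          Matrix.vecMulVec (φ y) (star (φ y))) =
          ∑ y, (q y : ℂ) • Matrix.vecMulVec (φ y) (star (φ y)) :=
        Finset.sum_congr rfl fun y _ => by
          rw [Matrix.one_mulVec, unit_dot (hφ y), mul_one]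
      rw [eβ, eγ] at h1
      exact h1
    -- Step 2: polarization.
    have hs2 := fun v => step2 ψ φ p q hψ hφ hp hq hp1 hq1 hmarg h v
    ext ⟨i, k⟩ ⟨j, l⟩
    have hD : (Matrix.of fun k l : S =>
        ∑ x, (p x : ℂ) * (ψ x i * star (ψ x j) * (ψ x k * star (ψ x l)))) =
        Matrix.of fun k l : S =>
          ∑ y, (q y : ℂ) * (φ y i * star (φ y j) * (φ y k * star (φ y l))) := by
      rw [← sub_eq_zero]
      refine quad_zero _ fun v => ?_
      have hv := congrFun (congrFun (hs2 v) i) j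
      rw [quad_expand ψ p i j v, quad_expand φ q i j v] at hv
      rw [Matrix.sub_mulVec, dotProduct_sub, hv, sub_self]
    have hkl := congrFun (congrFun hD k) l
    simp only [Matrix.of_apply] at hkl
    simp only [secmom, Matrix.sum_apply, Matrix.smul_apply, Matrix.kroneckerMap_apply,
      vecMulVec_apply, Pi.star_apply, smul_eq_mul]
    calc ∑ x, (p x : ℂ) * (ψ x i * star (ψ x j) * (ψ x k * star (ψ x l))) =
          ∑ y, (q y : ℂ) * (φ y i * star (φ y j) * (φ y k * star (φ y l))) := hkl
      _ = _ := by rfl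
  · intro hsm
    intro T iT dT E hE hpos1 hpos2 σ
    have hsm' : secmom ψ p = secmom φ q := hsm
    have hmarg' : ptraceR (belief ψ p) = ptraceR (belief φ q) := by
      rw [ptraceR_belief, ptraceR_belief, ← ptraceR_secmom hψ, ← ptraceR_secmom hφ, hsm']
    show retroExt E (belief ψ p) σ = retroExt E (belief φ q) σ
    rw [retro_formula ψ p hψ hp, retro_formula φ q hφ hq, readout, readout, hmarg', hsm']
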